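/- There exists a finite constant C such that for every α > 0 and all Lebesgue measurable sets E, F ⊂ ℂ², ∫_{ℂ²} ∫_{ℂ²} χ_{{|z₁w₂ − z₂w₁|² ≤ α}}(z,w) · χ_E(z) χ_F(w) dz dw ≤ C α |E|^{1/2} |F|^{1/2}. -/

import Mathlib

open MeasureTheory Set
open scoped ENNReal NNReal

lemma ofReal_zpow4 (m : ℤ) : ENNReal.ofReal ((4:ℝ) ^ m) = (4 : ℝ≥0∞) ^ m := by
  induction m using Int.rec with
  | ofNat n =>
      simp only [Int.ofNat_eq_coe, zpow_natCast]
      rw [ENNReal.ofReal_pow (by norm_num)]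
      norm_num
  | negSucc n =>
      simp only [zpow_negSucc]
      rw [ENNReal.ofReal_inv_of_pos (by positivity), ENNReal.ofReal_pow (by norm_num)]
      norm_num

lemma geo_nat : ∑' n : ℕ, ((4:ℝ≥0∞)⁻¹) ^ n ≤ 2 := by
  calc ∑' n : ℕ, ((4:ℝ≥0∞)⁻¹) ^ n ≤ ∑' n : ℕ, ((2:ℝ≥0∞)⁻¹) ^ n := by
        refine ENNReal.tsum_le_tsum fun n => ?_
        exact pow_le_pow_left' (ENNReal.inv_le_inv.mpr (by norm_num)) n
    _ = 2 := by
        rw [ENNReal.tsum_geometric, ENNReal.one_sub_inv_two, inv_inv]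

lemma zpow4_split (m₀ : ℤ) (n : ℕ) : (4:ℝ≥0∞) ^ (m₀ - (n:ℤ)) = 4 ^ m₀ * ((4:ℝ≥0∞)⁻¹) ^ n := by
  rw [ENNReal.zpow_sub (by norm_num) (by norm_num), zpow_natCast]
  rw [← ENNReal.inv_pow]

lemma geo_left (c : ℝ≥0∞) (m₀ : ℤ) :
    ∑' m : ℤ, (if m ≤ m₀ then c * (4:ℝ≥0∞) ^ m else 0) ≤ 2 * (c * 4 ^ m₀) := by
  have hinj : Function.Injective (fun n : ℕ => m₀ - n) := by
    intro a b h; simpa using h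
  have hsupp : Function.support (fun m : ℤ => if m ≤ m₀ then c * (4:ℝ≥0∞) ^ m else 0)
      ⊆ Set.range (fun n : ℕ => m₀ - n) := by
    intro m hm
    simp only [Function.mem_support, ne_eq, ite_eq_right_iff, not_forall] at hm
    obtain ⟨h1, -⟩ := hm
    exact ⟨(m₀ - m).toNat, by simp; omega⟩
  rw [← hinj.tsum_eq hsupp]
  have heq : ∀ n : ℕ, (if (m₀ - (n:ℤ)) ≤ m₀ then c * (4:ℝ≥0∞) ^ (m₀ - (n:ℤ)) else 0)
      = (c * 4 ^ m₀) * ((4:ℝ≥0∞)⁻¹) ^ n := by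
    intro n
    rw [if_pos (by omega), zpow4_split, mul_assoc]
  calc ∑' n : ℕ, (if (m₀ - (n:ℤ)) ≤ m₀ then c * (4:ℝ≥0∞) ^ (m₀ - (n:ℤ)) else 0)
      = ∑' n : ℕ, (c * 4 ^ m₀) * ((4:ℝ≥0∞)⁻¹) ^ n := by exact tsum_congr heq
    _ = (c * 4 ^ m₀) * ∑' n : ℕ, ((4:ℝ≥0∞)⁻¹) ^ n := ENNReal.tsum_mul_left
    _ ≤ (c * 4 ^ m₀) * 2 := mul_le_mul_right geo_nat _
    _ = 2 * (c * 4 ^ m₀) := mul_comm _ _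

lemma geo_right (c : ℝ≥0∞) (m₀ : ℤ) :
    ∑' m : ℤ, (if m₀ < m then c * (4:ℝ≥0∞) ^ (-m) else 0) ≤ 2 * (c * 4 ^ (-(m₀+1))) := by
  have hinj : Function.Injective (fun n : ℕ => m₀ + 1 + n) := by
    intro a b h; simpa using h
  have hsupp : Function.support (fun m : ℤ => if m₀ < m then c * (4:ℝ≥0∞) ^ (-m) else 0)
      ⊆ Set.range (fun n : ℕ => m₀ + 1 + n) := by
    intro m hm
    simp only [Function.mem_support, ne_eq, ite_eq_right_iff, not_forall] at hm
    obtain ⟨h1, -⟩ := hm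
    exact ⟨(m - m₀ - 1).toNat, by simp; omega⟩
  rw [← hinj.tsum_eq hsupp]
  have heq : ∀ n : ℕ, (if m₀ < m₀ + 1 + (n:ℤ) then c * (4:ℝ≥0∞) ^ (-(m₀ + 1 + (n:ℤ))) else 0)
      = (c * 4 ^ (-(m₀+1))) * ((4:ℝ≥0∞)⁻¹) ^ n := by
    intro n
    rw [if_pos (by omega)]
    have : -(m₀ + 1 + (n:ℤ)) = -(m₀+1) - (n:ℤ) := by ring
    rw [this, zpow4_split, mul_assoc]
  calc ∑' n : ℕ, (if m₀ < m₀ + 1 + (n:ℤ) then c * (4:ℝ≥0∞) ^ (-(m₀ + 1 + (n:ℤ))) else 0)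
      = ∑' n : ℕ, (c * 4 ^ (-(m₀+1))) * ((4:ℝ≥0∞)⁻¹) ^ n := tsum_congr heq
    _ = (c * 4 ^ (-(m₀+1))) * ∑' n : ℕ, ((4:ℝ≥0∞)⁻¹) ^ n := ENNReal.tsum_mul_left
    _ ≤ (c * 4 ^ (-(m₀+1))) * 2 := mul_le_mul_right geo_nat _
    _ = 2 * (c * 4 ^ (-(m₀+1))) := mul_comm _ _

lemma sqrt_div_mul (a b : ℝ) (ha : 0 < a) (hb : 0 < b) :
    Real.sqrt (b/a) * a = Real.sqrt (a*b) := by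
  rw [show a * b = (b/a) * a^2 by field_simp, Real.sqrt_mul (by positivity),
    Real.sqrt_sq ha.le]

lemma sum_min_geo (A B D : ℝ≥0∞) :
    ∑' m : ℤ, min (D * (4:ℝ≥0∞)^m * A) (D * (4:ℝ≥0∞)^(-m) * B)
      ≤ 4 * D * A ^ (1/2:ℝ) * B ^ (1/2:ℝ) := by
  have hrw : ∀ X : ℝ≥0∞, X ≠ 0 → X ^ (1/2:ℝ) ≠ 0 := by
    intro X hX
    simp [ENNReal.rpow_eq_zero_iff, hX]
  by_cases hA0 : A = 0
  · simp [hA0]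
  by_cases hB0 : B = 0
  · simp [hB0]
  by_cases hD0 : D = 0
  · simp [hD0]
  by_cases hAt : A = ⊤
  · refine le_top.trans_eq ?_
    rw [hAt, ENNReal.top_rpow_of_pos (by norm_num), eq_comm]
    rw [ENNReal.mul_eq_top]
    exact Or.inr ⟨ENNReal.mul_eq_top.mpr (Or.inl ⟨mul_ne_zero (by norm_num) hD0, rfl⟩),
      hrw B hB0⟩
  by_cases hBt : B = ⊤
  · refine le_top.trans_eq ?_
    rw [hBt, ENNReal.top_rpow_of_pos (by norm_num), eq_comm, ENNReal.mul_eq_top]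
    exact Or.inl ⟨mul_ne_zero (mul_ne_zero (by norm_num) hD0) (hrw A hA0), rfl⟩
  by_cases hDt : D = ⊤
  · refine le_top.trans_eq ?_
    rw [hDt, eq_comm, ENNReal.mul_eq_top]
    refine Or.inr ⟨ENNReal.mul_eq_top.mpr (Or.inr ⟨?_, hrw A hA0⟩), hrw B hB0⟩
    exact ENNReal.mul_top (by norm_num)
  -- main case
  set a := A.toReal with ha_def
  set b := B.toReal with hb_def
  have ha : 0 < a := ENNReal.toReal_pos hA0 hAt
  have hb : 0 < b := ENNReal.toReal_pos hB0 hBt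
  have hx : 0 < Real.sqrt (b/a) := Real.sqrt_pos.mpr (by positivity)
  set m₀ := Int.log 4 (Real.sqrt (b/a)) with hm₀
  have h1 : (4:ℝ)^m₀ ≤ Real.sqrt (b/a) := Int.zpow_log_le_self (by norm_num) hx
  have h2 : Real.sqrt (b/a) < (4:ℝ)^(m₀+1) := Int.lt_zpow_succ_log_self (by norm_num) _
  have key1 : (4:ℝ)^m₀ * a ≤ Real.sqrt (a*b) := by
    rw [← sqrt_div_mul a b ha hb]
    exact mul_le_mul_of_nonneg_right h1 ha.le
  have key2 : (4:ℝ)^(-(m₀+1)) * b ≤ Real.sqrt (a*b) := by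
    have hab : Real.sqrt (a*b) = Real.sqrt (a/b) * b := by
      rw [sqrt_div_mul b a hb ha, mul_comm a b]
    rw [hab]
    refine mul_le_mul_of_nonneg_right ?_ hb.le
    rw [zpow_neg]
    rw [show Real.sqrt (a/b) = (Real.sqrt (b/a))⁻¹ by
      rw [← Real.sqrt_inv, inv_div]]
    exact inv_anti₀ hx h2.le
  set G := ENNReal.ofReal (Real.sqrt (a*b)) with hG
  have hAC : A = ENNReal.ofReal a := (ENNReal.ofReal_toReal hAt).symm
  have hBC : B = ENNReal.ofReal b := (ENNReal.ofReal_toReal hBt).symm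
  have lift1 : (4:ℝ≥0∞)^m₀ * A ≤ G := by
    rw [hAC, ← ofReal_zpow4, ← ENNReal.ofReal_mul (by positivity)]
    exact ENNReal.ofReal_le_ofReal key1
  have lift2 : (4:ℝ≥0∞)^(-(m₀+1)) * B ≤ G := by
    rw [hBC, ← ofReal_zpow4, ← ENNReal.ofReal_mul (by positivity)]
    exact ENNReal.ofReal_le_ofReal key2
  have hGfin : G = A ^ (1/2:ℝ) * B ^ (1/2:ℝ) := by
    rw [hAC, hBC, ENNReal.ofReal_rpow_of_pos ha, ENNReal.ofReal_rpow_of_pos hb,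
      ← ENNReal.ofReal_mul (by positivity), hG]
    congr 1
    rw [Real.sqrt_mul ha.le, Real.sqrt_eq_rpow, Real.sqrt_eq_rpow]
  calc ∑' m : ℤ, min (D * (4:ℝ≥0∞)^m * A) (D * (4:ℝ≥0∞)^(-m) * B)
      ≤ ∑' m : ℤ, ((if m ≤ m₀ then (D*A) * (4:ℝ≥0∞)^m else 0)
          + (if m₀ < m then (D*B) * (4:ℝ≥0∞)^(-m) else 0)) := by
        refine ENNReal.tsum_le_tsum fun m => ?_
        by_cases hm : m ≤ m₀
        · rw [if_pos hm, if_neg (by omega), add_zero]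
          exact (min_le_left _ _).trans_eq (by ring)
        · rw [if_neg hm, if_pos (by omega), zero_add]
          exact (min_le_right _ _).trans_eq (by ring)
    _ = (∑' m : ℤ, (if m ≤ m₀ then (D*A) * (4:ℝ≥0∞)^m else 0))
        + ∑' m : ℤ, (if m₀ < m then (D*B) * (4:ℝ≥0∞)^(-m) else 0) := ENNReal.tsum_add
    _ ≤ 2 * ((D*A) * 4^m₀) + 2 * ((D*B) * 4^(-(m₀+1))) := add_le_add (geo_left _ _) (geo_right _ _)
    _ = 2 * (D * ((4:ℝ≥0∞)^m₀ * A)) + 2 * (D * ((4:ℝ≥0∞)^(-(m₀+1)) * B)) := by ring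
    _ ≤ 2 * (D * G) + 2 * (D * G) := by
        gcongr
    _ = 4 * D * G := by ring
    _ = 4 * D * A ^ (1/2:ℝ) * B ^ (1/2:ℝ) := by rw [hGfin]; ring

lemma sum_min_2d (a b : ℤ → ℝ≥0∞) (D : ℝ≥0∞) :
    ∑' jk : ℤ × ℤ, min (D * (4:ℝ≥0∞)^(jk.2 - jk.1) * a jk.1)
        (D * (4:ℝ≥0∞)^(jk.1 - jk.2) * b jk.2)
      ≤ 4 * D * (∑' j, a j) ^ (1/2:ℝ) * (∑' k, b k) ^ (1/2:ℝ) := by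
  set f : ℤ × ℤ → ℝ≥0∞ := fun jk => min (D * (4:ℝ≥0∞)^(jk.2 - jk.1) * a jk.1)
    (D * (4:ℝ≥0∞)^(jk.1 - jk.2) * b jk.2) with hf
  have hfe : ∀ m j : ℤ, f (j, j + m)
      = min (D * (4:ℝ≥0∞)^m * a j) (D * (4:ℝ≥0∞)^(-m) * b (j + m)) := by
    intro m j
    have e1 : (j + m) - j = m := by omega
    have e2 : j - (j + m) = -m := by omega
    simp [hf, e1, e2]
  have h1 : ∑' jk : ℤ × ℤ, f jk = ∑' q : ℤ × ℤ, f (q.2, q.2 + q.1) := by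
    have := Equiv.tsum_eq
      (⟨fun q : ℤ × ℤ => (q.2, q.2 + q.1), fun p => (p.2 - p.1, p.1),
        fun q => by simp, fun p => by simp⟩ : ℤ × ℤ ≃ ℤ × ℤ) f
    exact this.symm
  rw [h1, ENNReal.tsum_prod']
  have h2 : ∀ m : ℤ, ∑' j : ℤ, f (j, j + m)
      ≤ min (D * (4:ℝ≥0∞)^m * (∑' j, a j)) (D * (4:ℝ≥0∞)^(-m) * (∑' k, b k)) := by
    intro m
    have hshift : ∑' j : ℤ, b (j + m) = ∑' k, b k := by
      simpa using Equiv.tsum_eq (Equiv.addRight m) b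
    refine le_min ?_ ?_
    · calc ∑' j : ℤ, f (j, j + m) ≤ ∑' j : ℤ, (D * (4:ℝ≥0∞)^m) * a j := by
            refine ENNReal.tsum_le_tsum fun j => ?_
            rw [hfe]
            exact min_le_left _ _
        _ = (D * (4:ℝ≥0∞)^m) * ∑' j, a j := ENNReal.tsum_mul_left
        _ = D * (4:ℝ≥0∞)^m * (∑' j, a j) := by ring
    · calc ∑' j : ℤ, f (j, j + m) ≤ ∑' j : ℤ, (D * (4:ℝ≥0∞)^(-m)) * b (j + m) := by
            refine ENNReal.tsum_le_tsum fun j => ?_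
            rw [hfe]
            exact min_le_right _ _
        _ = (D * (4:ℝ≥0∞)^(-m)) * ∑' j, b (j + m) := ENNReal.tsum_mul_left
        _ = D * (4:ℝ≥0∞)^(-m) * (∑' k, b k) := by rw [hshift, mul_assoc]
  calc ∑' (m : ℤ) (j : ℤ), f (j, j + m)
      ≤ ∑' m : ℤ, min (D * (4:ℝ≥0∞)^m * (∑' j, a j)) (D * (4:ℝ≥0∞)^(-m) * (∑' k, b k)) :=
        ENNReal.tsum_le_tsum h2
    _ ≤ 4 * D * (∑' j, a j) ^ (1/2:ℝ) * (∑' k, b k) ^ (1/2:ℝ) := sum_min_geo _ _ _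

lemma ball_bound (ε r : ℝ) (hε : 0 ≤ ε) (hr : 0 < r) (c : ℂ) :
    volume (Metric.closedBall c (ε/r)) ≤ ENNReal.ofReal (Real.pi * (ε/r)^2) := by
  rw [Complex.volume_closedBall, ← ENNReal.ofReal_pow (by positivity),
    ← ENNReal.ofReal_coe_nnreal, NNReal.coe_real_pi,
    ← ENNReal.ofReal_mul (by positivity)]
  exact ENNReal.ofReal_le_ofReal (le_of_eq (mul_comm _ _))

lemma tube_core (p q : ℂ) (r ε S : ℝ) (hr : 0 < r) (hq : r ≤ ‖q‖) (hε : 0 ≤ ε) :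
    volume {v : ℂ × ℂ | ‖p * v.1 + q * v.2‖ ≤ ε ∧ ‖v‖ < S}
      ≤ ENNReal.ofReal (Real.pi * (ε/r)^2) * ENNReal.ofReal (Real.pi * S^2) := by
  have hq0 : q ≠ 0 := by
    intro h; rw [h] at hq; simp at hq; linarith
  set A := {v : ℂ × ℂ | ‖p * v.1 + q * v.2‖ ≤ ε ∧ ‖v‖ < S} with hA
  have hAmeas : MeasurableSet A := by
    apply MeasurableSet.inter
    · exact measurableSet_le (continuous_norm.comp (by continuity)).measurable
        measurable_const
    · exact measurableSet_lt continuous_norm.measurable measurable_const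
  rw [show (volume : Measure (ℂ × ℂ)) = (volume : Measure ℂ).prod volume from rfl]
  rw [Measure.prod_apply hAmeas]
  have hbound : ∀ x : ℂ, volume (Prod.mk x ⁻¹' A)
      ≤ (Metric.ball (0:ℂ) S).indicator (fun _ => ENNReal.ofReal (Real.pi * (ε/r)^2)) x := by
    intro x
    by_cases hx : x ∈ Metric.ball (0:ℂ) S
    · rw [Set.indicator_of_mem hx]
      refine le_trans (measure_mono ?_) (ball_bound ε r hε hr (-(p*x)/q))
      intro y hy
      obtain ⟨h1, -⟩ := hy
      rw [Metric.mem_closedBall]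
      have hdist : dist y (-(p*x)/q) = ‖p*x + q*y‖ / ‖q‖ := by
        rw [Complex.dist_eq]
        have : y - (-(p*x)/q) = (p*x + q*y)/q := by field_simp; ring
        rw [this, norm_div]
      rw [hdist]
      exact div_le_div₀ hε h1 hr hq
    · rw [Set.indicator_of_notMem hx]
      have : Prod.mk x ⁻¹' A = ∅ := by
        ext y
        simp only [Set.mem_preimage, Set.mem_empty_iff_false, iff_false, hA, Set.mem_setOf_eq]
        rintro ⟨-, h2⟩
        exact hx (Metric.mem_ball.mpr (by
          rw [dist_zero_right]
          exact lt_of_le_of_lt (norm_fst_le (x, y)) h2))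
      simp [this]
  calc ∫⁻ x : ℂ, volume (Prod.mk x ⁻¹' A)
      ≤ ∫⁻ x : ℂ, (Metric.ball (0:ℂ) S).indicator
          (fun _ => ENNReal.ofReal (Real.pi * (ε/r)^2)) x := lintegral_mono hbound
    _ = ENNReal.ofReal (Real.pi * (ε/r)^2) * volume (Metric.ball (0:ℂ) S) := by
        rw [lintegral_indicator measurableSet_ball, setLIntegral_const]
    _ ≤ ENNReal.ofReal (Real.pi * (ε/r)^2) * ENNReal.ofReal (Real.pi * S^2) := by
        refine mul_le_mul_right ?_ _
        rw [Complex.volume_ball]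
        by_cases hS : 0 ≤ S
        · rw [← ENNReal.ofReal_pow hS, ← ENNReal.ofReal_coe_nnreal, NNReal.coe_real_pi,
            ← ENNReal.ofReal_mul (by positivity)]
          exact ENNReal.ofReal_le_ofReal (le_of_eq (mul_comm _ _))
        · push_neg at hS
          rw [ENNReal.ofReal_of_nonpos hS.le]
          simp

lemma tube_vol (p q : ℂ) (r ε S : ℝ) (hr : 0 < r)
    (hmax : r ≤ max (‖p‖) (‖q‖)) (hε : 0 ≤ ε) :
    volume {v : ℂ × ℂ | ‖p * v.1 + q * v.2‖ ≤ ε ∧ ‖v‖ < S}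
      ≤ ENNReal.ofReal (Real.pi * (ε/r)^2) * ENNReal.ofReal (Real.pi * S^2) := by
  rcases le_max_iff.mp hmax with hp | hq
  · -- use swap to reduce to tube_core with (q := p)
    have hA'meas : MeasurableSet {v : ℂ × ℂ | ‖q * v.1 + p * v.2‖ ≤ ε ∧ ‖v‖ < S} := by
      apply MeasurableSet.inter
      · exact measurableSet_le (continuous_norm.comp (by continuity)).measurable
          measurable_const
      · exact measurableSet_lt continuous_norm.measurable measurable_const
    have hswap : {v : ℂ × ℂ | ‖p * v.1 + q * v.2‖ ≤ ε ∧ ‖v‖ < S}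
        = Prod.swap ⁻¹' {v : ℂ × ℂ | ‖q * v.1 + p * v.2‖ ≤ ε ∧ ‖v‖ < S} := by
      ext v
      simp only [Set.mem_preimage, Set.mem_setOf_eq, Prod.fst_swap, Prod.snd_swap]
      have hn : ‖v.swap‖ = ‖v‖ := by
        simp [Prod.norm_def, max_comm]
      constructor
      · rintro ⟨h1, h2⟩
        exact ⟨by rw [add_comm]; exact h1, by rwa [hn]⟩
      · rintro ⟨h1, h2⟩
        rw [hn] at h2
        exact ⟨by rw [add_comm]; exact h1, h2⟩
    rw [hswap, show (volume : Measure (ℂ × ℂ)) = (volume : Measure ℂ).prod volume from rfl,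
      (Measure.measurePreserving_swap).measure_preimage
        hA'meas.nullMeasurableSet]
    exact tube_core q p r ε S hr hp hε
  · exact tube_core p q r ε S hr hq hε

lemma inner_vol_bound (α : ℝ) (hα : 0 < α) (z : ℂ × ℂ) (G : Set (ℂ × ℂ))
    (r S : ℝ) (hr : 0 < r) (hz : r ≤ ‖z‖) (hGS : ∀ w ∈ G, ‖w‖ < S) :
    (∫⁻ w in G, ({q : (ℂ × ℂ) × (ℂ × ℂ) |
        ‖q.1.1 * q.2.2 - q.1.2 * q.2.1‖ ^ 2 ≤ α}).indicator
          (fun _ => (1:ℝ≥0∞)) (z, w))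
      ≤ ENNReal.ofReal (Real.pi * (Real.sqrt α / r)^2) * ENNReal.ofReal (Real.pi * S^2) := by
  set ε := Real.sqrt α with hεd
  have hsl_meas : MeasurableSet {w' : ℂ × ℂ | ‖z.1 * w'.2 - z.2 * w'.1‖ ^ 2 ≤ α} := by
    refine measurableSet_le ?_ measurable_const
    exact ((continuous_norm.comp (by continuity)).pow 2).measurable
  have h1 : ∀ w : ℂ × ℂ, ({q : (ℂ × ℂ) × (ℂ × ℂ) |
      ‖q.1.1 * q.2.2 - q.1.2 * q.2.1‖ ^ 2 ≤ α}).indicator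
        (fun _ => (1:ℝ≥0∞)) (z, w)
      = ({w' : ℂ × ℂ | ‖z.1 * w'.2 - z.2 * w'.1‖ ^ 2 ≤ α}).indicator
          (fun _ => (1:ℝ≥0∞)) w := by
    intro w
    simp only [Set.indicator_apply, Set.mem_setOf_eq]
  calc (∫⁻ w in G, ({q : (ℂ × ℂ) × (ℂ × ℂ) |
        ‖q.1.1 * q.2.2 - q.1.2 * q.2.1‖ ^ 2 ≤ α}).indicator
          (fun _ => (1:ℝ≥0∞)) (z, w))
      = volume ({w' : ℂ × ℂ | ‖z.1 * w'.2 - z.2 * w'.1‖ ^ 2 ≤ α} ∩ G) := by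
        simp_rw [h1]
        rw [lintegral_indicator hsl_meas, setLIntegral_one, Measure.restrict_apply hsl_meas]
    _ ≤ volume {v : ℂ × ℂ | ‖(-z.2) * v.1 + z.1 * v.2‖ ≤ ε ∧ ‖v‖ < S} := by
        refine measure_mono ?_
        rintro w ⟨hw1, hw2⟩
        refine ⟨?_, hGS w hw2⟩
        have habs : (-z.2) * w.1 + z.1 * w.2 = z.1 * w.2 - z.2 * w.1 := by ring
        rw [habs]
        exact Real.le_sqrt_of_sq_le hw1
    _ ≤ ENNReal.ofReal (Real.pi * (ε/r)^2) * ENNReal.ofReal (Real.pi * S^2) := by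
        refine tube_vol (-z.2) z.1 r ε S hr ?_ (Real.sqrt_nonneg α)
        have : max (‖-z.2‖) (‖z.1‖) = ‖z‖ := by
          rw [norm_neg, max_comm, Prod.norm_def]
        rw [this]
        exact hz

lemma inner_vol_bound' (α : ℝ) (hα : 0 < α) (w : ℂ × ℂ) (G : Set (ℂ × ℂ))
    (r S : ℝ) (hr : 0 < r) (hw : r ≤ ‖w‖) (hGS : ∀ z ∈ G, ‖z‖ < S) :
    (∫⁻ z in G, ({q : (ℂ × ℂ) × (ℂ × ℂ) |
        ‖q.1.1 * q.2.2 - q.1.2 * q.2.1‖ ^ 2 ≤ α}).indicator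
          (fun _ => (1:ℝ≥0∞)) (z, w))
      ≤ ENNReal.ofReal (Real.pi * (Real.sqrt α / r)^2) * ENNReal.ofReal (Real.pi * S^2) := by
  set ε := Real.sqrt α with hεd
  have hsl_meas : MeasurableSet {z' : ℂ × ℂ | ‖z'.1 * w.2 - z'.2 * w.1‖ ^ 2 ≤ α} := by
    refine measurableSet_le ?_ measurable_const
    exact ((continuous_norm.comp (by continuity)).pow 2).measurable
  have h1 : ∀ z : ℂ × ℂ, ({q : (ℂ × ℂ) × (ℂ × ℂ) |
      ‖q.1.1 * q.2.2 - q.1.2 * q.2.1‖ ^ 2 ≤ α}).indicator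
        (fun _ => (1:ℝ≥0∞)) (z, w)
      = ({z' : ℂ × ℂ | ‖z'.1 * w.2 - z'.2 * w.1‖ ^ 2 ≤ α}).indicator
          (fun _ => (1:ℝ≥0∞)) z := by
    intro z
    simp only [Set.indicator_apply, Set.mem_setOf_eq]
  calc (∫⁻ z in G, ({q : (ℂ × ℂ) × (ℂ × ℂ) |
        ‖q.1.1 * q.2.2 - q.1.2 * q.2.1‖ ^ 2 ≤ α}).indicator
          (fun _ => (1:ℝ≥0∞)) (z, w))
      = volume ({z' : ℂ × ℂ | ‖z'.1 * w.2 - z'.2 * w.1‖ ^ 2 ≤ α} ∩ G) := by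
        simp_rw [h1]
        rw [lintegral_indicator hsl_meas, setLIntegral_one, Measure.restrict_apply hsl_meas]
    _ ≤ volume {v : ℂ × ℂ | ‖w.2 * v.1 + (-w.1) * v.2‖ ≤ ε ∧ ‖v‖ < S} := by
        refine measure_mono ?_
        rintro z ⟨hz1, hz2⟩
        refine ⟨?_, hGS z hz2⟩
        have habs : w.2 * z.1 + (-w.1) * z.2 = z.1 * w.2 - z.2 * w.1 := by ring
        rw [habs]
        exact Real.le_sqrt_of_sq_le hz1
    _ ≤ ENNReal.ofReal (Real.pi * (ε/r)^2) * ENNReal.ofReal (Real.pi * S^2) := by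
        refine tube_vol w.2 (-w.1) r ε S hr ?_ (Real.sqrt_nonneg α)
        have : max (‖w.2‖) (‖-w.1‖) = ‖w‖ := by
          rw [norm_neg, max_comm, Prod.norm_def]
        rw [this]
        exact hw

noncomputable def kerFun (α : ℝ) : (ℂ × ℂ) → (ℂ × ℂ) → ℝ≥0∞ := fun z w =>
  ({q : (ℂ × ℂ) × (ℂ × ℂ) |
      ‖q.1.1 * q.2.2 - q.1.2 * q.2.1‖ ^ 2 ≤ α}).indicator
    (fun _ => (1 : ℝ≥0∞)) (z, w)

lemma Sset_meas (α : ℝ) : MeasurableSet {q : (ℂ × ℂ) × (ℂ × ℂ) |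
    ‖q.1.1 * q.2.2 - q.1.2 * q.2.1‖ ^ 2 ≤ α} := by
  refine measurableSet_le ?_ measurable_const
  exact ((continuous_norm.comp (by fun_prop)).pow 2).measurable

lemma kerFun_meas (α : ℝ) : Measurable (Function.uncurry (kerFun α)) := by
  have : Function.uncurry (kerFun α) = ({q : (ℂ × ℂ) × (ℂ × ℂ) |
      ‖q.1.1 * q.2.2 - q.1.2 * q.2.1‖ ^ 2 ≤ α}).indicator (fun _ => 1) := rfl
  rw [this]
  exact measurable_const.indicator (Sset_meas α)

lemma kerFun_meas_left (α : ℝ) (z : ℂ × ℂ) : Measurable (kerFun α z) :=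
  (measurable_const.indicator (Sset_meas α)).comp measurable_prodMk_left

lemma step1 (α : ℝ) (E F : Set (ℂ × ℂ)) (hE : MeasurableSet E) (hF : MeasurableSet F) :
    (∫⁻ z, ∫⁻ w, kerFun α z w
        * E.indicator (fun _ => (1 : ℝ≥0∞)) z * F.indicator (fun _ => (1 : ℝ≥0∞)) w)
      = ∫⁻ z in E, ∫⁻ w in F, kerFun α z w := by
  have hpt : ∀ z w, kerFun α z w * E.indicator (fun _ => (1:ℝ≥0∞)) z
      * F.indicator (fun _ => (1:ℝ≥0∞)) w
      = E.indicator (fun _ => (1:ℝ≥0∞)) z * (F.indicator (fun w' => kerFun α z w') w) := by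
    intro z w
    by_cases h1 : z ∈ E <;> by_cases h2 : w ∈ F <;> simp [h1, h2, mul_comm]
  calc (∫⁻ z, ∫⁻ w, kerFun α z w * E.indicator (fun _ => (1:ℝ≥0∞)) z
          * F.indicator (fun _ => (1:ℝ≥0∞)) w)
      = ∫⁻ z, E.indicator (fun _ => (1:ℝ≥0∞)) z
          * ∫⁻ w, F.indicator (fun w' => kerFun α z w') w := by
        refine lintegral_congr fun z => ?_
        simp_rw [hpt z]
        exact lintegral_const_mul _ ((kerFun_meas_left α z).indicator hF)
    _ = ∫⁻ z, E.indicator (fun z' => ∫⁻ w in F, kerFun α z' w) z := by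
        refine lintegral_congr fun z => ?_
        rw [lintegral_indicator hF]
        by_cases h1 : z ∈ E <;> simp [h1]
    _ = ∫⁻ z in E, ∫⁻ w in F, kerFun α z w := lintegral_indicator hE _

lemma real_const_calc (α : ℝ) (hα : 0 < α) (j k : ℤ) :
    Real.pi * (Real.sqrt α / (2:ℝ)^j)^2 * (Real.pi * ((2:ℝ)^(k+1))^2)
      = (4*Real.pi^2*α) * (4:ℝ)^(k-j) := by
  have hsq : ∀ m : ℤ, ((2:ℝ)^m)^2 = (4:ℝ)^m := by
    intro m
    rw [← zpow_natCast ((2:ℝ)^m) 2, ← zpow_mul, mul_comm, zpow_mul]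
    norm_num
  rw [div_pow, Real.sq_sqrt hα.le, hsq, hsq, zpow_sub₀ (by norm_num : (4:ℝ) ≠ 0),
    zpow_add₀ (by norm_num : (4:ℝ) ≠ 0)]
  have h1 : (4:ℝ)^j ≠ 0 := by positivity
  field_simp

/-- the complex determinant sublevel set functional bound in `ℂ²`. -/
theorem statement19 :
    ∃ C : ℝ, 0 ≤ C ∧ ∀ α : ℝ, 0 < α →
      ∀ E F : Set (ℂ × ℂ), MeasurableSet E → MeasurableSet F →
      (∫⁻ z, ∫⁻ w,
          ({q : (ℂ × ℂ) × (ℂ × ℂ) |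
              ‖q.1.1 * q.2.2 - q.1.2 * q.2.1‖ ^ 2 ≤ α}.indicator
                (fun _ => (1 : ℝ≥0∞)) (z, w))
            * E.indicator (fun _ => (1 : ℝ≥0∞)) z * F.indicator (fun _ => (1 : ℝ≥0∞)) w)
        ≤ ENNReal.ofReal (C * α) * (volume E) ^ (1/2 : ℝ) * (volume F) ^ (1/2 : ℝ) := by
  refine ⟨16 * Real.pi ^ 2, by positivity, ?_⟩
  intro α hα E F hE hF
  rw [show (∫⁻ z, ∫⁻ w,
          ({q : (ℂ × ℂ) × (ℂ × ℂ) |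
              ‖q.1.1 * q.2.2 - q.1.2 * q.2.1‖ ^ 2 ≤ α}.indicator
                (fun _ => (1 : ℝ≥0∞)) (z, w))
            * E.indicator (fun _ => (1 : ℝ≥0∞)) z * F.indicator (fun _ => (1 : ℝ≥0∞)) w)
      = ∫⁻ z, ∫⁻ w, kerFun α z w
          * E.indicator (fun _ => (1 : ℝ≥0∞)) z * F.indicator (fun _ => (1 : ℝ≥0∞)) w from rfl]
  rw [step1 α E F hE hF]
  -- Step 2: remove the origin
  have h00 : volume ({0} : Set (ℂ × ℂ)) = 0 := by
    have hprod : ({0} : Set (ℂ × ℂ)) = ({0} : Set ℂ) ×ˢ ({0} : Set ℂ) := by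
      ext v; simp [Prod.ext_iff]
    rw [show (volume : Measure (ℂ × ℂ)) = (volume : Measure ℂ).prod volume from rfl, hprod,
      Measure.prod_prod, measure_singleton, mul_zero]
  have hres : ∀ (G : Set (ℂ × ℂ)),
      (volume : Measure (ℂ × ℂ)).restrict (G \ {0}) = volume.restrict G := by
    intro G
    exact Measure.restrict_congr_set (diff_null_ae_eq_self h00)
  set E' := E \ ({0} : Set (ℂ × ℂ)) with hE'd
  set F' := F \ ({0} : Set (ℂ × ℂ)) with hF'd
  have hE' : MeasurableSet E' := hE.diff (measurableSet_singleton 0)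
  have hF' : MeasurableSet F' := hF.diff (measurableSet_singleton 0)
  have h0E : (0 : ℂ × ℂ) ∉ E' := fun h => h.2 rfl
  have h0F : (0 : ℂ × ℂ) ∉ F' := fun h => h.2 rfl
  have hvolE : volume E' = volume E := measure_diff_null h00
  have hvolF : volume F' = volume F := measure_diff_null h00
  have hstep2 : (∫⁻ z in E, ∫⁻ w in F, kerFun α z w) = ∫⁻ z in E', ∫⁻ w in F', kerFun α z w := by
    rw [← hres E, ← hres F]
  rw [hstep2, ← hvolE, ← hvolF]
  -- annuli
  set Ann : ℤ → Set (ℂ × ℂ) := fun j => {z | (2:ℝ)^j ≤ ‖z‖ ∧ ‖z‖ < (2:ℝ)^(j+1)} with hAnn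
  have hAnnMeas : ∀ j, MeasurableSet (Ann j) := fun j =>
    (measurableSet_le measurable_const continuous_norm.measurable).inter
      (measurableSet_lt continuous_norm.measurable measurable_const)
  have hcover : ∀ (G : Set (ℂ × ℂ)), (0 : ℂ × ℂ) ∉ G → G = ⋃ j : ℤ, G ∩ Ann j := by
    intro G h0G
    ext z
    simp only [Set.mem_iUnion, Set.mem_inter_iff, hAnn, Set.mem_setOf_eq]
    constructor
    · intro hz
      have hz0 : 0 < ‖z‖ := by
        rcases eq_or_ne z 0 with h | h
        · exact absurd (h ▸ hz) h0G
        · exact norm_pos_iff.mpr h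
      refine ⟨Int.log 2 ‖z‖, hz, ?_, ?_⟩
      · have := Int.zpow_log_le_self (b := 2) (by norm_num) hz0
        simpa using this
      · have := Int.lt_zpow_succ_log_self (b := 2) (by norm_num) ‖z‖
        simpa using this
    · rintro ⟨j, hj, -⟩; exact hj
  have hdisj : ∀ (G : Set (ℂ × ℂ)),
      Pairwise (Function.onFun Disjoint fun j => G ∩ Ann j) := by
    intro G j k hjk
    refine Set.disjoint_left.mpr ?_
    rintro z ⟨-, hj1, hj2⟩ ⟨-, hk1, hk2⟩
    rcases lt_or_gt_of_ne hjk with h | h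
    · have : (2:ℝ)^(j+1) ≤ 2^k := by
        apply zpow_le_zpow_right₀ one_le_two (by omega)
      linarith
    · have : (2:ℝ)^(k+1) ≤ 2^j := by
        apply zpow_le_zpow_right₀ one_le_two (by omega)
      linarith
  -- decomposition
  have hFmeas_inner : ∀ (k' : ℤ), Measurable fun z => ∫⁻ w in F' ∩ Ann k', kerFun α z w := by
    intro k'
    exact Measurable.lintegral_prod_right' (kerFun_meas α)
  have hdecomp : (∫⁻ z in E', ∫⁻ w in F', kerFun α z w)
      = ∑' jk : ℤ × ℤ, ∫⁻ z in E' ∩ Ann jk.1, ∫⁻ w in F' ∩ Ann jk.2, kerFun α z w := by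
    rw [ENNReal.tsum_prod']
    calc (∫⁻ z in E', ∫⁻ w in F', kerFun α z w)
        = ∑' j : ℤ, ∫⁻ z in E' ∩ Ann j, ∫⁻ w in F', kerFun α z w := by
          nth_rewrite 1 [hcover E' h0E]
          exact lintegral_iUnion (fun j => hE'.inter (hAnnMeas j)) (hdisj E') _
      _ = ∑' j : ℤ, ∫⁻ z in E' ∩ Ann j, ∑' k' : ℤ, ∫⁻ w in F' ∩ Ann k', kerFun α z w := by
          refine tsum_congr fun j => ?_
          refine lintegral_congr fun z => ?_
          nth_rewrite 1 [hcover F' h0F]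
          exact lintegral_iUnion (fun k' => hF'.inter (hAnnMeas k')) (hdisj F') _
      _ = ∑' (j : ℤ) (k' : ℤ), ∫⁻ z in E' ∩ Ann j, ∫⁻ w in F' ∩ Ann k', kerFun α z w := by
          refine tsum_congr fun j => ?_
          exact lintegral_tsum fun k' => (hFmeas_inner k').aemeasurable
  rw [hdecomp]
  set D := ENNReal.ofReal (4*Real.pi^2*α) with hD
  have hbound : ∀ jk : ℤ × ℤ,
      (∫⁻ z in E' ∩ Ann jk.1, ∫⁻ w in F' ∩ Ann jk.2, kerFun α z w)
        ≤ min (D * (4:ℝ≥0∞)^(jk.2 - jk.1) * volume (E' ∩ Ann jk.1))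
            (D * (4:ℝ≥0∞)^(jk.1 - jk.2) * volume (F' ∩ Ann jk.2)) := by
    rintro ⟨j, k⟩
    have hconst : ∀ (m n : ℤ), ENNReal.ofReal (Real.pi * (Real.sqrt α / (2:ℝ)^m)^2)
        * ENNReal.ofReal (Real.pi * ((2:ℝ)^(n+1))^2) = D * (4:ℝ≥0∞)^(n - m) := by
      intro m n
      rw [← ENNReal.ofReal_mul (by positivity), real_const_calc α hα m n,
        ENNReal.ofReal_mul (by positivity), ofReal_zpow4]
    refine le_min ?_ ?_
    · calc (∫⁻ z in E' ∩ Ann j, ∫⁻ w in F' ∩ Ann k, kerFun α z w)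
          ≤ ∫⁻ _ in E' ∩ Ann j, (ENNReal.ofReal (Real.pi * (Real.sqrt α / (2:ℝ)^j)^2)
              * ENNReal.ofReal (Real.pi * ((2:ℝ)^(k+1))^2)) := by
            refine setLIntegral_mono measurable_const fun z hz => ?_
            exact inner_vol_bound α hα z (F' ∩ Ann k) ((2:ℝ)^j) ((2:ℝ)^(k+1))
              (by positivity) hz.2.1 (fun w hw => hw.2.2)
        _ = (ENNReal.ofReal (Real.pi * (Real.sqrt α / (2:ℝ)^j)^2)
              * ENNReal.ofReal (Real.pi * ((2:ℝ)^(k+1))^2)) * volume (E' ∩ Ann j) :=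
            setLIntegral_const _ _
        _ = D * (4:ℝ≥0∞)^(k - j) * volume (E' ∩ Ann j) := by rw [hconst j k]
    · calc (∫⁻ z in E' ∩ Ann j, ∫⁻ w in F' ∩ Ann k, kerFun α z w)
          = ∫⁻ w in F' ∩ Ann k, ∫⁻ z in E' ∩ Ann j, kerFun α z w :=
            lintegral_lintegral_swap (kerFun_meas α).aemeasurable
        _ ≤ ∫⁻ _ in F' ∩ Ann k, (ENNReal.ofReal (Real.pi * (Real.sqrt α / (2:ℝ)^k)^2)
              * ENNReal.ofReal (Real.pi * ((2:ℝ)^(j+1))^2)) := by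
            refine setLIntegral_mono measurable_const fun w hw => ?_
            exact inner_vol_bound' α hα w (E' ∩ Ann j) ((2:ℝ)^k) ((2:ℝ)^(j+1))
              (by positivity) hw.2.1 (fun z hz => hz.2.2)
        _ = (ENNReal.ofReal (Real.pi * (Real.sqrt α / (2:ℝ)^k)^2)
              * ENNReal.ofReal (Real.pi * ((2:ℝ)^(j+1))^2)) * volume (F' ∩ Ann k) :=
            setLIntegral_const _ _
        _ = D * (4:ℝ≥0∞)^(j - k) * volume (F' ∩ Ann k) := by rw [hconst k j]
  have hsumE : ∑' j : ℤ, volume (E' ∩ Ann j) = volume E' := by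
    rw [← measure_iUnion (hdisj E') (fun j => hE'.inter (hAnnMeas j)), ← hcover E' h0E]
  have hsumF : ∑' j : ℤ, volume (F' ∩ Ann j) = volume F' := by
    rw [← measure_iUnion (hdisj F') (fun j => hF'.inter (hAnnMeas j)), ← hcover F' h0F]
  calc ∑' jk : ℤ × ℤ, ∫⁻ z in E' ∩ Ann jk.1, ∫⁻ w in F' ∩ Ann jk.2, kerFun α z w
      ≤ ∑' jk : ℤ × ℤ, min (D * (4:ℝ≥0∞)^(jk.2 - jk.1) * volume (E' ∩ Ann jk.1))
          (D * (4:ℝ≥0∞)^(jk.1 - jk.2) * volume (F' ∩ Ann jk.2)) :=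
        ENNReal.tsum_le_tsum hbound
    _ ≤ 4 * D * (∑' j : ℤ, volume (E' ∩ Ann j)) ^ (1/2:ℝ)
          * (∑' k : ℤ, volume (F' ∩ Ann k)) ^ (1/2:ℝ) :=
        sum_min_2d _ _ D
    _ = ENNReal.ofReal (16 * Real.pi ^ 2 * α) * (volume E') ^ (1/2:ℝ)
          * (volume F') ^ (1/2:ℝ) := by
        rw [hsumE, hsumF, hD, ← ENNReal.ofReal_ofNat 4, ← ENNReal.ofReal_mul (by norm_num)]
        congr 3
        ring
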